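/- Let G be a DAG over vertex set X, and let A, B be distinct vertices with C a set of vertices not containing A or B. If every path between A and B is inactive given C (i.e., A and B are d-separated by C), then A and B are d-separated by C in the subgraph of G induced by the ancestors of {A, B} ∪ C. -/

import Mathlib

variable {V : Type*}

/-- `Ancestor E x y`: there is a (possibly trivial) directed path from `x` to `y`. -/
def Ancestor (E : V → V → Prop) (x y : V) : Prop :=
  Relation.ReflTransGen E x y

/-- A directed graph is acyclic (a DAG) if it has no directed cycles. -/
def Acyclic (E : V → V → Prop) : Prop :=
  ∀ v : V, ¬ Relation.TransGen E v v

/-- `v` is a collider on the path (vertex list) `l`. -/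
def ColliderOn (E : V → V → Prop) (l : List V) (v : V) : Prop :=
  ∃ x y : V, [x, v, y] <:+: l ∧ E x v ∧ E y v

/-- `v` is an interior non-collider on the path `l`. -/
def NonColliderOn (E : V → V → Prop) (l : List V) (v : V) : Prop :=
  (∃ x y : V, [x, v, y] <:+: l) ∧ ¬ ColliderOn E l v

/-- `l` is a path between `a` and `b` that is active given the conditioning set `C`:
every collider on `l` has a descendant in `C` and no non-collider on `l` is in `C`. -/
def ActivePath (E : V → V → Prop) (C : Set V) (a b : V) (l : List V) : Prop :=
  l.head? = some a ∧ l.getLast? = some b ∧ l.Nodup ∧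
  l.Chain' (fun u v => E u v ∨ E v u) ∧
  (∀ v, ColliderOn E l v → ∃ d ∈ C, Ancestor E v d) ∧
  (∀ v, NonColliderOn E l v → v ∉ C)

/-- `a` and `b` are d-connected given `C`. -/
def DConn (E : V → V → Prop) (C : Set V) (a b : V) : Prop :=
  ∃ l : List V, ActivePath E C a b l

/-- `a` and `b` are d-separated given `C`. -/
def DSep (E : V → V → Prop) (C : Set V) (a b : V) : Prop :=
  ¬ DConn E C a b

/-- If `A` and `B` are d-separated by `C` in a DAG `G`, then they are d-separated by `C`
in the subgraph of `G` induced by the ancestors of `{A, B} ∪ C`. -/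
theorem stmt_0 (E : V → V → Prop) (hacyc : Acyclic E) (A B : V) (C : Set V)
    (hne : A ≠ B) (hA : A ∉ C) (hB : B ∉ C)
    (hsep : DSep E C A B) :
    DSep (fun u v => E u v ∧
        (∃ y, (y = A ∨ y = B ∨ y ∈ C) ∧ Ancestor E u y) ∧
        (∃ y, (y = A ∨ y = B ∨ y ∈ C) ∧ Ancestor E v y))
      C A B := by
  set E' : V → V → Prop := fun u v => E u v ∧
      (∃ y, (y = A ∨ y = B ∨ y ∈ C) ∧ Ancestor E u y) ∧
      (∃ y, (y = A ∨ y = B ∨ y ∈ C) ∧ Ancestor E v y) with hE'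
  intro ⟨l, hhead, hlast, hnodup, hchain, hcol, hncol⟩
  have hsub : ∀ u v, E' u v → E u v := fun u v h => h.1
  -- adjacent pairs: E' direction determined by E direction
  have hadj : ∀ x v y, [x, v, y] <:+: l → E x v → E' x v := by
    intro x v y hinf hxv
    have hc : List.Chain' (fun u v => E' u v ∨ E' v u) [x, v, y] :=
      hchain.infix hinf
    rcases hc.rel_head with h | h
    · exact h
    · exact absurd (Relation.TransGen.head hxv (Relation.TransGen.single h.1))
        (hacyc x)
  have hadj2 : ∀ x v y, [x, v, y] <:+: l → E y v → E' y v := by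
    intro x v y hinf hyv
    have hc : List.Chain' (fun u v => E' u v ∨ E' v u) [x, v, y] :=
      hchain.infix hinf
    have hc2 : List.Chain' (fun u v => E' u v ∨ E' v u) [v, y] :=
      hc.infix ⟨[x], [], by simp⟩
    rcases hc2.rel_head with h | h
    · exact absurd (Relation.TransGen.head hyv (Relation.TransGen.single h.1))
        (hacyc y)
    · exact h
  apply hsep
  refine ⟨l, hhead, hlast, hnodup, hchain.imp (fun {u v} h => h.imp (hsub _ _) (hsub _ _)), ?_, ?_⟩
  · rintro v ⟨x, y, hinf, hxv, hyv⟩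
    obtain ⟨d, hdC, hvd⟩ := hcol v ⟨x, y, hinf, hadj x v y hinf hxv,
      hadj2 x v y hinf hyv⟩
    exact ⟨d, hdC, Relation.ReflTransGen.mono hsub _ _ hvd⟩
  · rintro v ⟨⟨x, y, hinf⟩, hnc⟩
    refine hncol v ⟨⟨x, y, hinf⟩, ?_⟩
    rintro ⟨x', y', hinf', hxv, hyv⟩
    exact hnc ⟨x', y', hinf', hxv.1, hyv.1⟩
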